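/- For Λ ≥ 2, integer M ≥ 1, and the collection E = {R_1, …, R_M} with R_m = [0,1) ∪ [m, m+(Λ−1)^{-1}), any subcollection F ⊆ E with #F = k satisfies (∑_{R∈F} |R|)/|sh(F)| = k(1+(Λ−1)^{-1})/(1 + k(Λ−1)^{-1}), and this quantity tends to Λ as k → ∞; in particular if k ≥ Λ−1 then (∑_{R∈F} |R|)/|sh(F)| ≥ Λ/2. -/

import Mathlib

open MeasureTheory Set Filter
open scoped ENNReal

theorem stmt12 (Λ : ℝ) (hΛ : 2 ≤ Λ) (M : ℕ) (R : Fin M → Set ℝ)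
    (hR : ∀ m, R m =
      Set.Ico (0 : ℝ) 1 ∪ Set.Ico ((m : ℝ) + 1) ((m : ℝ) + 1 + (Λ - 1)⁻¹)) :
    (∀ F : Finset (Fin M), F.Nonempty →
      (∑ m ∈ F, volume (R m) = ENNReal.ofReal ((F.card : ℝ) * (1 + (Λ - 1)⁻¹))) ∧
      (volume (⋃ m ∈ F, R m) = ENNReal.ofReal (1 + (F.card : ℝ) * (Λ - 1)⁻¹)) ∧
      (Λ - 1 ≤ (F.card : ℝ) →
        ENNReal.ofReal (Λ / 2) * volume (⋃ m ∈ F, R m) ≤ ∑ m ∈ F, volume (R m))) ∧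
    Tendsto (fun k : ℕ => ((k : ℝ) * (1 + (Λ - 1)⁻¹)) / (1 + (k : ℝ) * (Λ - 1)⁻¹))
      atTop (nhds Λ) := by
  have hΛ1 : (1:ℝ) ≤ Λ - 1 := by linarith
  have hd0 : (0:ℝ) < Λ - 1 := by linarith
  set ε := (Λ - 1)⁻¹ with hεdef
  have hε0 : 0 < ε := inv_pos.mpr hd0
  have hε1 : ε ≤ 1 := inv_le_one_of_one_le₀ hΛ1
  have hde : (Λ - 1) * ε = 1 := mul_inv_cancel₀ (ne_of_gt hd0)
  -- pairwise disjointness of the shifted intervals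
  have key : ∀ a b : ℕ, a ≠ b →
      Disjoint (Ico ((a:ℝ)+1) ((a:ℝ)+1+ε)) (Ico ((b:ℝ)+1) ((b:ℝ)+1+ε)) := by
    intro a b hab
    rw [Set.Ico_disjoint_Ico]
    rcases lt_or_gt_of_ne hab with h | h
    · have h1 : (a:ℝ) + 1 ≤ (b:ℝ) := by exact_mod_cast Nat.succ_le_of_lt h
      calc min ((a:ℝ)+1+ε) ((b:ℝ)+1+ε) ≤ (a:ℝ)+1+ε := min_le_left _ _
        _ ≤ (b:ℝ)+1 := by linarith
        _ ≤ max ((a:ℝ)+1) ((b:ℝ)+1) := le_max_right _ _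
    · have h1 : (b:ℝ) + 1 ≤ (a:ℝ) := by exact_mod_cast Nat.succ_le_of_lt h
      calc min ((a:ℝ)+1+ε) ((b:ℝ)+1+ε) ≤ (b:ℝ)+1+ε := min_le_right _ _
        _ ≤ (a:ℝ)+1 := by linarith
        _ ≤ max ((a:ℝ)+1) ((b:ℝ)+1) := le_max_left _ _
  have key0 : ∀ a : ℕ, Disjoint (Ico (0:ℝ) 1) (Ico ((a:ℝ)+1) ((a:ℝ)+1+ε)) := by
    intro a
    rw [Set.Ico_disjoint_Ico]
    have : (0:ℝ) ≤ a := Nat.cast_nonneg a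
    calc min (1:ℝ) ((a:ℝ)+1+ε) ≤ 1 := min_le_left _ _
      _ ≤ (a:ℝ)+1 := by linarith
      _ ≤ max (0:ℝ) ((a:ℝ)+1) := le_max_right _ _
  have hvol : ∀ m : Fin M, volume (R m) = ENNReal.ofReal (1 + ε) := by
    intro m
    rw [hR m, measure_union (key0 m) measurableSet_Ico]
    rw [Real.volume_Ico, Real.volume_Ico]
    rw [← ENNReal.ofReal_add (by norm_num) (by linarith)]
    ring_nf
  constructor
  · intro F hF
    have hcard0 : (0:ℝ) ≤ (F.card : ℝ) := Nat.cast_nonneg _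
    have hsum : ∑ m ∈ F, volume (R m)
        = ENNReal.ofReal ((F.card : ℝ) * (1 + ε)) := by
      rw [Finset.sum_congr rfl (fun m _ => hvol m), Finset.sum_const, nsmul_eq_mul,
        ENNReal.ofReal_mul hcard0, ENNReal.ofReal_natCast]
    have hun : (⋃ m ∈ F, R m)
        = Ico (0:ℝ) 1 ∪ ⋃ m ∈ F, Ico ((m:ℝ)+1) ((m:ℝ)+1+ε) := by
      ext x
      simp only [hR, mem_iUnion, mem_union, exists_prop]
      constructor
      · rintro ⟨m, hm, h | h⟩
        · exact Or.inl h
        · exact Or.inr ⟨m, hm, h⟩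
      · rintro (h | ⟨m, hm, h⟩)
        · obtain ⟨m, hm⟩ := hF; exact ⟨m, hm, Or.inl h⟩
        · exact ⟨m, hm, Or.inr h⟩
    have hS : volume (⋃ m ∈ F, Ico ((m:ℝ)+1) ((m:ℝ)+1+ε))
        = ENNReal.ofReal ((F.card : ℝ) * ε) := by
      rw [measure_biUnion_finset ?_ (fun m _ => measurableSet_Ico)]
      · have : ∀ m ∈ F, volume (Ico ((m:ℝ)+1) ((m:ℝ)+1+ε)) = ENNReal.ofReal ε := by
          intro m _
          rw [Real.volume_Ico]; ring_nf
        rw [Finset.sum_congr rfl this, Finset.sum_const, nsmul_eq_mul,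
          ENNReal.ofReal_mul hcard0, ENNReal.ofReal_natCast]
      · intro a _ b _ hab
        exact key a b (fun h => hab (Fin.ext h))
    have hUvol : volume (⋃ m ∈ F, R m)
        = ENNReal.ofReal (1 + (F.card : ℝ) * ε) := by
      have hmeas : MeasurableSet (⋃ m ∈ F, Ico ((m:ℝ)+1) ((m:ℝ)+1+ε)) :=
        F.measurableSet_biUnion (fun m _ => measurableSet_Ico)
      have hdisj : Disjoint (Ico (0:ℝ) 1) (⋃ m ∈ F, Ico ((m:ℝ)+1) ((m:ℝ)+1+ε)) :=
        Set.disjoint_iUnion₂_right.mpr (fun m _ => key0 m)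
      rw [hun, measure_union hdisj hmeas, Real.volume_Ico, hS,
        ← ENNReal.ofReal_add (by norm_num) (by positivity)]
      norm_num
    refine ⟨hsum, hUvol, ?_⟩
    intro hk
    rw [hsum, hUvol, ← ENNReal.ofReal_mul (by linarith)]
    apply ENNReal.ofReal_le_ofReal
    nlinarith [hde, hε0.le, hcard0]
  · have hne : ε ≠ 0 := ne_of_gt hε0
    have hlim : Tendsto (fun k : ℕ => (1 + ε) / ((k:ℝ)⁻¹ + ε)) atTop (nhds Λ) := by
      have h1 : Tendsto (fun k : ℕ => (k:ℝ)⁻¹) atTop (nhds 0) :=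
        tendsto_inv_atTop_zero.comp tendsto_natCast_atTop_atTop
      have h2 : Tendsto (fun k : ℕ => (k:ℝ)⁻¹ + ε) atTop (nhds ε) := by
        simpa using h1.add tendsto_const_nhds
      have h3 := Tendsto.div (tendsto_const_nhds (x := (1 + ε : ℝ))) h2 hne
      have heq : (1 + ε) / ε = Λ := by
        rw [div_eq_iff hne]
        nlinarith [hde]
      rwa [heq] at h3
    apply hlim.congr'
    filter_upwards [eventually_ge_atTop 1] with k hk
    have hk0 : (k:ℝ) ≠ 0 := by positivity
    field_simp
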